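/- Let H be a real Hilbert space, L, B, A₂, Φ, 𝓛 as follows: L bounded linear selfadjoint with (Lw,w) ≥ c_L‖w‖²; B, A₂ linear monotone; Φ monotone; 𝓛 Lipschitz with constant C_𝓛. Suppose for each g ∈ H the map 𝓢 : H → H is defined so that 𝓢φ is the unique solution of L(𝓢φ) + hB(𝓢φ) + h²A₂(𝓢φ) + h²Φ(𝓢φ) + h²𝓛(𝓢φ) = g₀ + h²𝓐φ, where 𝓐 : H → H is nonexpansive (‖𝓐φ - 𝓐ζ‖ ≤ ‖φ - ζ‖). Then for all φ, ζ ∈ H and h with c_L - h² - C_𝓛h² > 0, ‖𝓢φ - 𝓢ζ‖ ≤ (h / (2√(c_L - h² - C_𝓛h²))) ‖φ - ζ‖. In particular, for h small enough 𝓢 is a contraction and has a unique fixed point. -/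

import Mathlib

open scoped RealInnerProductSpace

theorem stmt13 {H : Type*} [NormedAddCommGroup H] [InnerProductSpace ℝ H]
    [CompleteSpace H]
    (L : H →L[ℝ] H) (cL : ℝ) (hcL : 0 < cL)
    (hLsym : ∀ w z : H, ⟪L w, z⟫ = ⟪w, L z⟫)
    (hLpos : ∀ w : H, cL * ‖w‖ ^ 2 ≤ ⟪L w, w⟫)
    (B A₂ : H →ₗ[ℝ] H)
    (hB : ∀ w : H, 0 ≤ ⟪B w, w⟫) (hA₂ : ∀ w : H, 0 ≤ ⟪A₂ w, w⟫)
    (Φ : H → H) (hΦ : ∀ w z : H, 0 ≤ ⟪Φ w - Φ z, w - z⟫)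
    (𝓛 : H → H) (C𝓛 : ℝ) (h𝓛 : ∀ w z : H, ‖𝓛 w - 𝓛 z‖ ≤ C𝓛 * ‖w - z‖)
    (h : ℝ) (hh : 0 < h) (hsmall : 0 < cL - h ^ 2 - C𝓛 * h ^ 2)
    (g₀ : H) (𝓐 : H → H) (h𝓐 : ∀ φ ζ : H, ‖𝓐 φ - 𝓐 ζ‖ ≤ ‖φ - ζ‖)
    (𝓢 : H → H)
    (h𝓢 : ∀ φ : H,
      L (𝓢 φ) + h • B (𝓢 φ) + h ^ 2 • A₂ (𝓢 φ) + h ^ 2 • Φ (𝓢 φ)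
        + h ^ 2 • 𝓛 (𝓢 φ) = g₀ + h ^ 2 • 𝓐 φ) :
    (∀ φ ζ : H,
        ‖𝓢 φ - 𝓢 ζ‖ ≤ h / (2 * Real.sqrt (cL - h ^ 2 - C𝓛 * h ^ 2)) * ‖φ - ζ‖) ∧
      (h / (2 * Real.sqrt (cL - h ^ 2 - C𝓛 * h ^ 2)) < 1 → ∃! φ : H, 𝓢 φ = φ) := by
  set s : ℝ := cL - h ^ 2 - C𝓛 * h ^ 2 with hs
  have hsqrt : 0 < Real.sqrt s := Real.sqrt_pos.mpr hsmall
  set k : ℝ := h / (2 * Real.sqrt s) with hk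
  have hk0 : 0 < k := div_pos hh (by positivity)
  have main : ∀ φ ζ : H, ‖𝓢 φ - 𝓢 ζ‖ ≤ k * ‖φ - ζ‖ := by
    intro φ ζ
    set w : H := 𝓢 φ - 𝓢 ζ with hw
    have heq : L w + h • (B (𝓢 φ) - B (𝓢 ζ)) + h ^ 2 • (A₂ (𝓢 φ) - A₂ (𝓢 ζ))
        + h ^ 2 • (Φ (𝓢 φ) - Φ (𝓢 ζ)) + h ^ 2 • (𝓛 (𝓢 φ) - 𝓛 (𝓢 ζ))
        = h ^ 2 • (𝓐 φ - 𝓐 ζ) := by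
      have h1 := h𝓢 φ
      have h2 := h𝓢 ζ
      rw [hw, map_sub]
      linear_combination (norm := module) h1 - h2
    have hip : ⟪L w, w⟫ + h * ⟪B (𝓢 φ) - B (𝓢 ζ), w⟫
        + h ^ 2 * ⟪A₂ (𝓢 φ) - A₂ (𝓢 ζ), w⟫
        + h ^ 2 * ⟪Φ (𝓢 φ) - Φ (𝓢 ζ), w⟫
        + h ^ 2 * ⟪𝓛 (𝓢 φ) - 𝓛 (𝓢 ζ), w⟫
        = h ^ 2 * ⟪𝓐 φ - 𝓐 ζ, w⟫ := by
      have := congrArg (fun x : H => ⟪x, w⟫) heq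
      simpa [inner_add_left, real_inner_smul_left] using this
    have hBw : 0 ≤ ⟪B (𝓢 φ) - B (𝓢 ζ), w⟫ := by
      have := hB w
      rw [hw, map_sub] at this
      exact this
    have hA₂w : 0 ≤ ⟪A₂ (𝓢 φ) - A₂ (𝓢 ζ), w⟫ := by
      have := hA₂ w
      rw [hw, map_sub] at this
      exact this
    have hΦw : 0 ≤ ⟪Φ (𝓢 φ) - Φ (𝓢 ζ), w⟫ := hΦ _ _
    have h𝓛w : -(C𝓛 * ‖w‖ ^ 2) ≤ ⟪𝓛 (𝓢 φ) - 𝓛 (𝓢 ζ), w⟫ := by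
      have h1 : |⟪𝓛 (𝓢 φ) - 𝓛 (𝓢 ζ), w⟫| ≤ ‖𝓛 (𝓢 φ) - 𝓛 (𝓢 ζ)‖ * ‖w‖ :=
        abs_real_inner_le_norm _ _
      have h2 : ‖𝓛 (𝓢 φ) - 𝓛 (𝓢 ζ)‖ ≤ C𝓛 * ‖w‖ := h𝓛 _ _
      have h3 := neg_abs_le ⟪𝓛 (𝓢 φ) - 𝓛 (𝓢 ζ), w⟫
      nlinarith [norm_nonneg w, abs_nonneg ⟪𝓛 (𝓢 φ) - 𝓛 (𝓢 ζ), w⟫]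
    have hcs : ⟪𝓐 φ - 𝓐 ζ, w⟫ ≤ ‖φ - ζ‖ * ‖w‖ :=
      le_trans (real_inner_le_norm _ _)
        (mul_le_mul_of_nonneg_right (h𝓐 φ ζ) (norm_nonneg _))
    have hL : cL * ‖w‖ ^ 2 ≤ ⟪L w, w⟫ := hLpos w
    have key : s * ‖w‖ ^ 2 ≤ h ^ 2 / 4 * ‖φ - ζ‖ ^ 2 := by
      nlinarith [sq_nonneg (‖φ - ζ‖ - 2 * ‖w‖), sq_nonneg h, mul_pos hh hh,
        norm_nonneg w, norm_nonneg (φ - ζ)]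
    have hkk : k ^ 2 = h ^ 2 / (4 * s) := by
      rw [hk, div_pow, mul_pow, Real.sq_sqrt hsmall.le]
      norm_num
    have hsq : ‖w‖ ^ 2 ≤ (k * ‖φ - ζ‖) ^ 2 := by
      rw [mul_pow, hkk, div_mul_eq_mul_div, le_div_iff₀ (by positivity)]
      nlinarith [key]
    have := Real.sqrt_le_sqrt hsq
    rwa [Real.sqrt_sq (norm_nonneg _),
      Real.sqrt_sq (by positivity : (0:ℝ) ≤ k * ‖φ - ζ‖)] at this
  refine ⟨main, fun hk1 => ?_⟩
  set K : NNReal := ⟨k, hk0.le⟩ with hK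
  have lip : LipschitzWith K 𝓢 :=
    LipschitzWith.of_dist_le_mul (by
      intro x y
      rw [dist_eq_norm, dist_eq_norm]
      exact main x y)
  have cw : ContractingWith K 𝓢 := ⟨by exact_mod_cast hk1, lip⟩
  exact ⟨cw.fixedPoint, cw.fixedPoint_isFixedPt,
    fun y hy => cw.fixedPoint_unique hy⟩
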